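/- Consider the ORFM. The total ribosome count is conserved: the weighted sum of the components of the ORFM vector field, with weight 1 on the coordinates z_E and z_p and weight m^{pi} on each codon coordinate x^{pi}_j, is identically zero at every point of the state space. Consequently, along any solution (x(t), z(t)) of the ORFM, the quantity N_r(x(t), z(t)) = z_E(t) + Σ_p z_p(t) + Σ_{p,i} m^{pi} Σ_j x^{pi}_j(t) is constant in t. -/

import Mathlib

/-- State of an ORFM: codon occupancies `x p i j` (species `p`, strand `i`,
codon `j`, 1-based so that `j` ranges over `1,…,n p i`), translating-pool
occupancies `z p`, and the empty-ribosome pool occupancy `zE`.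
(Only the coordinates with `p < M`, `i < s p`, `1 ≤ j ≤ n p i` are meaningful.) -/
structure ORFMState where
  x : ℕ → ℕ → ℕ → ℝ
  z : ℕ → ℝ
  zE : ℝ

/-- The data of an Orthogonal Ribosomal Flow Model (ORFM): `M ≥ 1` ribosome
species, `s p` strands for species `p`, strand `(p,i)` of length `n p i ≥ 1`
with multiplicity `m p i ≥ 1` and positive rates `lam p i 0, …, lam p i (n p i)`,
an initiation function `G p i` (continuously differentiable on `[0,∞)`,
strictly increasing on `[0,∞)`, vanishing at `0`), and binding rates
`kp p > 0`, `km p > 0`. -/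
structure ORFM where
  M : ℕ
  s : ℕ → ℕ
  n : ℕ → ℕ → ℕ
  m : ℕ → ℕ → ℕ
  lam : ℕ → ℕ → ℕ → ℝ
  G : ℕ → ℕ → ℝ → ℝ
  kp : ℕ → ℝ
  km : ℕ → ℝ
  hM : 0 < M
  hn : ∀ p < M, ∀ i < s p, 1 ≤ n p i
  hm : ∀ p < M, ∀ i < s p, 1 ≤ m p i
  hlam : ∀ p < M, ∀ i < s p, ∀ j ≤ n p i, 0 < lam p i j
  hG_smooth : ∀ p < M, ∀ i < s p, ContDiffOn ℝ 1 (G p i) (Set.Ici 0)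
  hG_mono : ∀ p < M, ∀ i < s p, StrictMonoOn (G p i) (Set.Ici 0)
  hG_zero : ∀ p < M, ∀ i < s p, G p i 0 = 0
  hkp : ∀ p < M, 0 < kp p
  hkm : ∀ p < M, 0 < km p

/-- Ribosomal flux from codon `k` to codon `k+1` on strand `(p,i)`
(`k = 0` is initiation from the pool `z p`, `k = n p i` is termination). -/
noncomputable def ORFM.flow (S : ORFM) (st : ORFMState) (p i k : ℕ) : ℝ :=
  if k = 0 then S.lam p i 0 * S.G p i (st.z p) * (1 - st.x p i 1)
  else if k = S.n p i then S.lam p i k * st.x p i k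
  else S.lam p i k * st.x p i k * (1 - st.x p i (k + 1))

/-- Component of the ORFM vector field for codon `j` (1-based) of strand `(p,i)`:
`dx^{pi}_j/dt` = inflow minus outflow. -/
noncomputable def ORFM.fx (S : ORFM) (st : ORFMState) (p i j : ℕ) : ℝ :=
  S.flow st p i (j - 1) - S.flow st p i j

/-- Component of the ORFM vector field for the pool `z p`: `dz_p/dt`. -/
noncomputable def ORFM.fz (S : ORFM) (st : ORFMState) (p : ℕ) : ℝ :=
  S.kp p * st.zE - S.km p * st.z p
    + ∑ i ∈ Finset.range (S.s p), (S.m p i : ℝ) * S.flow st p i (S.n p i)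
    - ∑ i ∈ Finset.range (S.s p), (S.m p i : ℝ) * S.flow st p i 0

/-- Component of the ORFM vector field for the empty pool: `dz_E/dt`. -/
noncomputable def ORFM.fzE (S : ORFM) (st : ORFMState) : ℝ :=
  ∑ p ∈ Finset.range S.M, S.km p * st.z p - ∑ p ∈ Finset.range S.M, S.kp p * st.zE

/-- Membership in the state space `Ω`: all codon occupancies lie in `[0,1]`
and all pools are nonnegative. -/
def ORFM.inOmega (S : ORFM) (st : ORFMState) : Prop :=
  (∀ p < S.M, ∀ i < S.s p, ∀ j, 1 ≤ j → j ≤ S.n p i → st.x p i j ∈ Set.Icc (0:ℝ) 1)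
    ∧ 0 ≤ st.zE ∧ ∀ p < S.M, 0 ≤ st.z p

/-- The total ribosome count `N_r(x,z)`. -/
noncomputable def ORFM.NrOf (S : ORFM) (st : ORFMState) : ℝ :=
  st.zE + ∑ p ∈ Finset.range S.M, st.z p
    + ∑ p ∈ Finset.range S.M, ∑ i ∈ Finset.range (S.s p),
        (S.m p i : ℝ) * ∑ j ∈ Finset.Icc 1 (S.n p i), st.x p i j

/-- A steady state: every component of the ORFM vector field vanishes. -/
def ORFM.isSteady (S : ORFM) (st : ORFMState) : Prop :=
  (∀ p < S.M, ∀ i < S.s p, ∀ j, 1 ≤ j → j ≤ S.n p i → S.fx st p i j = 0)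
    ∧ (∀ p < S.M, S.fz st p = 0) ∧ S.fzE st = 0

/-- A (forward-time) solution of the ORFM: every meaningful coordinate is
differentiable in time with derivative given by the corresponding component
of the ORFM vector field, for all `t ≥ 0`. -/
def ORFM.isSolution (S : ORFM) (traj : ℝ → ORFMState) : Prop :=
  (∀ t, 0 ≤ t → ∀ p < S.M, ∀ i < S.s p, ∀ j, 1 ≤ j → j ≤ S.n p i →
      HasDerivAt (fun τ => (traj τ).x p i j) (S.fx (traj t) p i j) t)
    ∧ (∀ t, 0 ≤ t → ∀ p < S.M,
        HasDerivAt (fun τ => (traj τ).z p) (S.fz (traj t) p) t)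
    ∧ ∀ t, 0 ≤ t → HasDerivAt (fun τ => (traj τ).zE) (S.fzE (traj t)) t

/-- Conservation of ribosomes in the ORFM: at every point of
the state space `Ω`, the weighted sum of the components of the vector field
(weight `m p i` on each codon coordinate, weight `1` on each pool coordinate)
is zero; consequently, along any solution the total ribosome count
`N_r(x(t),z(t))` is constant in `t`. -/
lemma orfm_telescope (S : ORFM) (st : ORFMState) (p i : ℕ) :
    ∑ j ∈ Finset.Icc 1 (S.n p i), S.fx st p i j
      = S.flow st p i 0 - S.flow st p i (S.n p i) := by
  rw [show Finset.Icc 1 (S.n p i) = Finset.Ico 1 (S.n p i + 1) by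
    rw [Finset.Ico_add_one_right_eq_Icc], Finset.sum_Ico_eq_sum_range]
  simp only [Nat.add_sub_cancel, ORFM.fx]
  have : ∀ k, S.flow st p i (1 + k - 1) - S.flow st p i (1 + k)
      = S.flow st p i k - S.flow st p i (k + 1) := by
    intro k
    rw [Nat.add_sub_cancel_left, Nat.add_comm]
  simp only [this]
  exact Finset.sum_range_sub' (fun k => S.flow st p i k) (S.n p i)

lemma orfm_key (S : ORFM) (st : ORFMState) :
    (∑ p ∈ Finset.range S.M, ∑ i ∈ Finset.range (S.s p),
        (S.m p i : ℝ) * ∑ j ∈ Finset.Icc 1 (S.n p i), S.fx st p i j)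
      + (∑ p ∈ Finset.range S.M, S.fz st p) + S.fzE st = 0 := by
  simp only [ORFM.fz, ORFM.fzE, orfm_telescope, mul_sub]
  rw [← Finset.sum_sub_distrib, ← Finset.sum_add_distrib, ← Finset.sum_add_distrib]
  apply Finset.sum_eq_zero
  intro p _
  rw [Finset.sum_sub_distrib]
  ring

theorem orfm_conservation (S : ORFM) :
    (∀ st : ORFMState, S.inOmega st →
      (∑ p ∈ Finset.range S.M, ∑ i ∈ Finset.range (S.s p),
          (S.m p i : ℝ) * ∑ j ∈ Finset.Icc 1 (S.n p i), S.fx st p i j)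
        + (∑ p ∈ Finset.range S.M, S.fz st p) + S.fzE st = 0)
      ∧ ∀ traj : ℝ → ORFMState, S.isSolution traj →
          ∀ t, 0 ≤ t → S.NrOf (traj t) = S.NrOf (traj 0) := by
  constructor
  · intro st _
    exact orfm_key S st
  · intro traj hsol t ht
    obtain ⟨hx, hz, hzE⟩ := hsol
    -- derivative of NrOf along the trajectory is 0 at every u ≥ 0
    have hD : ∀ u : ℝ, 0 ≤ u →
        HasDerivAt (fun τ => S.NrOf (traj τ)) 0 u := by
      intro u hu
      have hzE' := hzE u hu
      have hz' : HasDerivAt (fun τ => ∑ p ∈ Finset.range S.M, (traj τ).z p)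
          (∑ p ∈ Finset.range S.M, S.fz (traj u) p) u := by
        apply HasDerivAt.fun_sum
        intro p hp
        exact hz u hu p (Finset.mem_range.mp hp)
      have hx' : HasDerivAt (fun τ => ∑ p ∈ Finset.range S.M,
            ∑ i ∈ Finset.range (S.s p),
              (S.m p i : ℝ) * ∑ j ∈ Finset.Icc 1 (S.n p i), (traj τ).x p i j)
          (∑ p ∈ Finset.range S.M, ∑ i ∈ Finset.range (S.s p),
              (S.m p i : ℝ) * ∑ j ∈ Finset.Icc 1 (S.n p i), S.fx (traj u) p i j)
          u := by
        apply HasDerivAt.fun_sum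
        intro p hp
        apply HasDerivAt.fun_sum
        intro i hi
        apply HasDerivAt.const_mul
        apply HasDerivAt.fun_sum
        intro j hj
        obtain ⟨hj1, hj2⟩ := Finset.mem_Icc.mp hj
        exact hx u hu p (Finset.mem_range.mp hp) i (Finset.mem_range.mp hi) j hj1 hj2
      have := (hzE'.add hz').add hx'
      have hzero : S.fzE (traj u) + (∑ p ∈ Finset.range S.M, S.fz (traj u) p)
          + (∑ p ∈ Finset.range S.M, ∑ i ∈ Finset.range (S.s p),
              (S.m p i : ℝ) * ∑ j ∈ Finset.Icc 1 (S.n p i), S.fx (traj u) p i j)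
          = 0 := by
        have := orfm_key S (traj u)
        linarith
      rw [hzero] at this
      simp only [ORFM.NrOf]
      exact this
    have hconst := constant_of_has_deriv_right_zero
      (f := fun τ => S.NrOf (traj τ)) (a := 0) (b := t)
      (fun u hu => ((hD u hu.1).continuousAt).continuousWithinAt)
      (fun u hu => (hD u hu.1).hasDerivWithinAt)
    exact hconst t (Set.mem_Icc.mpr ⟨ht, le_refl t⟩)
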